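/- Let G be a connected graph with adjacency matrix eigenvalues μ₁ ≥ ... ≥ μₙ where μₙ < 0. Then 1 + μ₁/|μₙ| ≤ χ_v(G) (Hoffman bound for the vector chromatic number). -/

import Mathlib

open Matrix Finset
open scoped Kronecker Classical

/-- Largest eigenvalue (spectral supremum) of a real matrix. -/
noncomputable def lamMax {n : ℕ} (M : Matrix (Fin n) (Fin n) ℝ) : ℝ := sSup (spectrum ℝ M)

/-- Smallest eigenvalue (spectral infimum) of a real matrix. -/
noncomputable def lamMin {n : ℕ} (M : Matrix (Fin n) (Fin n) ℝ) : ℝ := sInf (spectrum ℝ M)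

/-- Diagonal matrix of vertex degrees. -/
noncomputable def degMatrix {n : ℕ} (G : SimpleGraph (Fin n)) : Matrix (Fin n) (Fin n) ℝ :=
  Matrix.diagonal fun i => (G.degree i : ℝ)

/-- The vector chromatic number: the smallest real `k ≥ 2` such that there exist unit
vectors `u i` with `⟪u i, u j⟫ ≤ -1/(k-1)` for all edges `ij`. -/
noncomputable def vecChromNum {V : Type*} [Fintype V] (G : SimpleGraph V) : ℝ :=
  sInf {k : ℝ | 2 ≤ k ∧ ∃ u : V → EuclideanSpace ℝ V,
    (∀ i, ‖u i‖ = 1) ∧ ∀ i j, G.Adj i j → (inner ℝ (u i) (u j) : ℝ) ≤ -(1/(k-1))}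

open scoped Pointwise in
private lemma lamMin_quadform {n : ℕ} (A : Matrix (Fin n) (Fin n) ℝ) (hA : A.IsHermitian)
    (z : Fin n → ℝ) : lamMin A * (∑ i, z i ^ 2) ≤ z ⬝ᵥ (A *ᵥ z) := by
  set c := lamMin A with hc
  set M : Matrix (Fin n) (Fin n) ℝ := A - c • 1 with hMdef
  have h1 : (c • (1 : Matrix (Fin n) (Fin n) ℝ)).IsHermitian := by
    simp [Matrix.IsHermitian]
  have hM : M.IsHermitian := hA.sub h1
  have hfin : (spectrum ℝ A).Finite := A.finite_real_spectrum
  have hpsd : M.PosSemidef := by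
    apply hM.posSemidef_iff_eigenvalues_nonneg.mpr
    intro i
    haveI : Nonempty (Fin n) := ⟨i⟩
    have hmem : hM.eigenvalues i ∈ spectrum ℝ M := hM.eigenvalues_mem_spectrum_real i
    have hAne : (spectrum ℝ A).Nonempty := by
      rw [hA.spectrum_real_eq_range_eigenvalues]
      exact Set.range_nonempty _
    have halg : (algebraMap ℝ (Matrix (Fin n) (Fin n) ℝ)) c = c • 1 :=
      Algebra.algebraMap_eq_smul_one c
    have hspecM : spectrum ℝ A - {c} = spectrum ℝ M := by
      rw [hMdef, ← halg]
      exact spectrum.sub_singleton_eq A c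
    have : hM.eigenvalues i ∈ spectrum ℝ A - {c} := by rw [hspecM]; exact hmem
    rw [Set.mem_sub] at this
    obtain ⟨w, hw, w', hw', hzw⟩ := this
    rw [Set.mem_singleton_iff] at hw'
    subst hw'
    have : c ≤ w := csInf_le hfin.bddBelow hw
    show (0:ℝ) ≤ hM.eigenvalues i
    linarith [hzw ▸ sub_nonneg.mpr this]
  have h := hpsd.dotProduct_mulVec_nonneg z
  have hstar : star z = z := star_trivial z
  rw [hstar] at h
  have hexp : z ⬝ᵥ (M *ᵥ z) = z ⬝ᵥ (A *ᵥ z) - c * ∑ i, z i ^ 2 := by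
    rw [hMdef, Matrix.sub_mulVec, dotProduct_sub, Matrix.smul_mulVec, Matrix.one_mulVec,
      dotProduct_smul]
    congr 1
    simp [dotProduct, pow_two, smul_eq_mul]
  rw [hexp] at h
  linarith

private lemma sum_sq_of_norm_one {n : ℕ} (x : EuclideanSpace ℝ (Fin n)) (h : ‖x‖ = 1) :
    ∑ i, x i ^ 2 = 1 := by
  have := EuclideanSpace.norm_eq x
  rw [h] at this
  have h3 := congrArg (· ^ 2) this.symm
  simp only [one_pow] at h3
  rw [Real.sq_sqrt (by positivity)] at h3
  simpa [Real.norm_eq_abs, sq_abs] using h3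

private lemma inner_eq_sum {n : ℕ} (x y : EuclideanSpace ℝ (Fin n)) :
    (inner ℝ x y : ℝ) = ∑ c, x c * y c := by
  simp [PiLp.inner_apply, RCLike.inner_apply]
  exact Finset.sum_congr rfl fun _ _ => mul_comm _ _

private lemma exists_top_eigenvector {n : ℕ} (A : Matrix (Fin n) (Fin n) ℝ) (hA : A.IsHermitian)
    (hne : Nonempty (Fin n)) :
    ∃ x : Fin n → ℝ, (∑ i, x i ^ 2) = 1 ∧ x ⬝ᵥ (A *ᵥ x) = lamMax A := by
  have hspec : spectrum ℝ A = Set.range hA.eigenvalues := hA.spectrum_real_eq_range_eigenvalues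
  have hfin : (spectrum ℝ A).Finite := A.finite_real_spectrum
  have hnes : (spectrum ℝ A).Nonempty := by rw [hspec]; exact Set.range_nonempty _
  have hmem : lamMax A ∈ spectrum ℝ A := hnes.csSup_mem hfin
  rw [hspec] at hmem
  obtain ⟨i₀, hi₀⟩ := hmem
  have hnorm : ‖hA.eigenvectorBasis i₀‖ = 1 := hA.eigenvectorBasis.orthonormal.1 i₀
  have hsq : ∑ i, (hA.eigenvectorBasis i₀ i) ^ 2 = 1 := sum_sq_of_norm_one _ hnorm
  refine ⟨⇑(hA.eigenvectorBasis i₀), hsq, ?_⟩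
  have hmul := hA.mulVec_eigenvectorBasis i₀
  rw [hmul, dotProduct_smul, hi₀]
  have : (⇑(hA.eigenvectorBasis i₀) ⬝ᵥ ⇑(hA.eigenvectorBasis i₀)) = 1 := by
    simp [dotProduct, ← pow_two, hsq]
  rw [smul_eq_mul, this, mul_one]

private lemma simplex_vectors {n : ℕ} (hn : 2 ≤ n) :
    ∃ u : Fin n → EuclideanSpace ℝ (Fin n), (∀ i, ‖u i‖ = 1) ∧
      ∀ i j : Fin n, i ≠ j → (inner ℝ (u i) (u j) : ℝ) = -(1/((n:ℝ)-1)) := by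
  have hn0 : (0:ℝ) < n := by
    have : (2:ℝ) ≤ n := by exact_mod_cast hn
    linarith
  have hn1 : (1:ℝ) ≤ (n:ℝ) - 1 := by
    have : (2:ℝ) ≤ n := by exact_mod_cast hn
    linarith
  have hn1' : (0:ℝ) < (n:ℝ) - 1 := by linarith
  set s : ℝ := Real.sqrt ((n:ℝ)/((n:ℝ)-1)) with hs
  have hs2 : s^2 = (n:ℝ)/((n:ℝ)-1) := Real.sq_sqrt (by positivity)
  set u : Fin n → EuclideanSpace ℝ (Fin n) :=
    fun i => WithLp.toLp 2 (fun c => s * ((if c = i then 1 else 0) - 1/(n:ℝ))) with hu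
  have key : ∀ i j : Fin n,
      ∑ c, ((if c = i then (1:ℝ) else 0) - 1/(n:ℝ)) * ((if c = j then (1:ℝ) else 0) - 1/(n:ℝ))
      = (if i = j then 1 else 0) - 1/(n:ℝ) := by
    intro i j
    have expand : ∀ c : Fin n,
        ((if c = i then (1:ℝ) else 0) - 1/(n:ℝ)) * ((if c = j then (1:ℝ) else 0) - 1/(n:ℝ))
        = (if c = i then (1:ℝ) else 0) * (if c = j then (1:ℝ) else 0)
          - (1/(n:ℝ)) * (if c = i then (1:ℝ) else 0)
          - (1/(n:ℝ)) * (if c = j then (1:ℝ) else 0) + 1/(n:ℝ)^2 := by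
      intro c; ring
    simp_rw [expand]
    rw [Finset.sum_add_distrib, Finset.sum_sub_distrib, Finset.sum_sub_distrib,
      ← Finset.mul_sum, ← Finset.mul_sum]
    have h1 : ∑ c : Fin n, (if c = i then (1:ℝ) else 0) = 1 := by simp
    have h2 : ∑ c : Fin n, (if c = j then (1:ℝ) else 0) = 1 := by simp
    have h3 : ∑ c : Fin n, (if c = i then (1:ℝ) else 0) * (if c = j then (1:ℝ) else 0)
        = if i = j then 1 else 0 := by
      simp_rw [ite_mul, one_mul, zero_mul]
      rw [Finset.sum_ite_eq' Finset.univ i fun c => if c = j then (1:ℝ) else 0]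
      simp [eq_comm]
    have h4 : ∑ _c : Fin n, (1:ℝ)/(n:ℝ)^2 = (n:ℝ)/(n:ℝ)^2 := by
      simp [Finset.sum_const]
      ring
    rw [h1, h2, h3, h4]
    have : (n:ℝ)/(n:ℝ)^2 = 1/(n:ℝ) := by
      field_simp
    rw [this]; ring
  have hinner : ∀ i j : Fin n,
      (inner ℝ (u i) (u j) : ℝ) = s^2 * ((if i = j then 1 else 0) - 1/(n:ℝ)) := by
    intro i j
    have h0 : (inner ℝ (u i) (u j) : ℝ) = ∑ c, u i c * u j c := inner_eq_sum _ _
    rw [h0]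
    have h1 : ∑ c, u i c * u j c
        = ∑ c, s^2 * (((if c = i then (1:ℝ) else 0) - 1/(n:ℝ)) * ((if c = j then (1:ℝ) else 0) - 1/(n:ℝ))) := by
      apply Finset.sum_congr rfl
      intro c _
      simp only [hu, PiLp.toLp_apply]
      ring
    rw [h1, ← Finset.mul_sum, key i j]
  have hnorm : ∀ i, ‖u i‖ = 1 := by
    intro i
    have h2 : ‖u i‖^2 = (inner ℝ (u i) (u i) : ℝ) := (real_inner_self_eq_norm_sq (u i)).symm
    rw [hinner i i, if_pos rfl, hs2] at h2
    have h3 : ‖u i‖^2 = 1 := by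
      rw [h2]
      field_simp
    have h4 : 0 ≤ ‖u i‖ := norm_nonneg _
    nlinarith
  refine ⟨u, hnorm, fun i j hij => ?_⟩
  rw [hinner i j, if_neg hij, hs2]
  field_simp
  ring

/-- Hoffman bound for the vector chromatic number of a connected graph:
`1 + mu1/|muN| <= chi_v(G)`. -/
theorem hoffman_bound_vector_chromatic_number {n : ℕ} (G : SimpleGraph (Fin n))
    (hconn : G.Connected) (hneg : lamMin (G.adjMatrix ℝ) < 0) :
    1 + lamMax (G.adjMatrix ℝ) / |lamMin (G.adjMatrix ℝ)| ≤ vecChromNum G := by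
  set A := G.adjMatrix ℝ with hAdef
  have hA : A.IsHermitian := by
    have := SimpleGraph.isSymm_adjMatrix (α := ℝ) G
    rwa [Matrix.IsHermitian, Matrix.conjTranspose_eq_transpose_of_trivial]
  have hne : Nonempty (Fin n) := by
    by_contra h
    haveI := not_nonempty_iff.mp h
    have hemp : spectrum ℝ A = ∅ := by
      rw [hA.spectrum_real_eq_range_eigenvalues]
      exact Set.range_eq_empty _
    have h0 : lamMin A = 0 := by rw [lamMin, hemp, Real.sInf_empty]
    rw [h0] at hneg; exact lt_irrefl 0 hneg
  have hfin : (spectrum ℝ A).Finite := A.finite_real_spectrum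
  have hnes : (spectrum ℝ A).Nonempty := by
    rw [hA.spectrum_real_eq_range_eigenvalues]; exact Set.range_nonempty _
  have hminmem : lamMin A ∈ spectrum ℝ A := hnes.csInf_mem hfin
  have hedge : ∃ i j : Fin n, G.Adj i j := by
    by_contra h
    push_neg at h
    have hA0 : A = 0 := by
      ext i j
      simp [hAdef, h i j]
    have hm2 : lamMin A ∈ spectrum ℝ (0 : Matrix (Fin n) (Fin n) ℝ) := by
      rw [← hA0]; exact hminmem
    rw [spectrum.zero_eq, Set.mem_singleton_iff] at hm2
    rw [hm2] at hneg
    exact lt_irrefl 0 hneg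
  obtain ⟨i₁, j₁, hadj⟩ := hedge
  have hn2 : 2 ≤ n := by
    have h := Fintype.one_lt_card_iff_nontrivial.mpr ⟨i₁, j₁, hadj.ne⟩
    simp at h; omega
  obtain ⟨u, hun, huin⟩ := simplex_vectors hn2
  have hnR : (2:ℝ) ≤ (n:ℝ) := by exact_mod_cast hn2
  have hSne : ((n:ℝ)) ∈ {k : ℝ | 2 ≤ k ∧ ∃ u : Fin n → EuclideanSpace ℝ (Fin n),
      (∀ i, ‖u i‖ = 1) ∧ ∀ i j, G.Adj i j → (inner ℝ (u i) (u j) : ℝ) ≤ -(1/(k-1))} :=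
    ⟨hnR, u, hun, fun i j hij => le_of_eq (huin i j hij.ne)⟩
  rw [vecChromNum]
  apply le_csInf ⟨_, hSne⟩
  rintro k ⟨hk2, v, hvn, hvin⟩
  set t : ℝ := 1/(k-1) with ht
  have hk1 : (1:ℝ) ≤ k - 1 := by linarith
  have hk1' : (0:ℝ) < k - 1 := by linarith
  have ht0 : 0 < t := by rw [ht]; positivity
  obtain ⟨x, hx1, hx2⟩ := exists_top_eigenvector A hA hne
  set y : Fin n → ℝ := fun i => |x i| with hy
  have hysq : ∑ i, y i ^ 2 = 1 := by simpa [hy, sq_abs] using hx1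
  have hynn : ∀ i, 0 ≤ y i := fun i => abs_nonneg _
  have hAnn : ∀ i j, 0 ≤ A i j := by
    intro i j
    simp only [hAdef, SimpleGraph.adjMatrix_apply]
    split_ifs <;> norm_num
  have hdot : ∀ z : Fin n → ℝ, z ⬝ᵥ (A *ᵥ z) = ∑ i, ∑ j, A i j * z i * z j := by
    intro z
    simp only [dotProduct, Matrix.mulVec, Finset.mul_sum]
    apply Finset.sum_congr rfl; intro i _
    apply Finset.sum_congr rfl; intro j _
    ring
  have hQ1 : lamMax A ≤ ∑ i, ∑ j, A i j * y i * y j := by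
    rw [← hx2, hdot]
    apply Finset.sum_le_sum; intro i _
    apply Finset.sum_le_sum; intro j _
    have hxy : x i * x j ≤ y i * y j := by
      rw [hy]
      calc x i * x j ≤ |x i * x j| := le_abs_self _
        _ = |x i| * |x j| := abs_mul _ _
    calc A i j * x i * x j = A i j * (x i * x j) := by ring
      _ ≤ A i j * (y i * y j) := mul_le_mul_of_nonneg_left hxy (hAnn i j)
      _ = A i j * y i * y j := by ring
  have hvsum : ∀ i, ∑ c, (v i c) ^ 2 = 1 := fun i => sum_sq_of_norm_one _ (hvn i)
  have hQ2 : lamMin A ≤ ∑ i, ∑ j, A i j * y i * y j * (inner ℝ (v i) (v j) : ℝ) := by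
    have hcoord : ∀ c : Fin n, lamMin A * (∑ i, (y i * v i c)^2)
        ≤ ∑ i, ∑ j, A i j * (y i * v i c) * (y j * v j c) := by
      intro c
      have h := lamMin_quadform A hA (fun i => y i * v i c)
      rwa [hdot] at h
    have hsum := Finset.sum_le_sum (fun c (_ : c ∈ Finset.univ) => hcoord c)
    have hL : ∑ c, lamMin A * (∑ i, (y i * v i c)^2) = lamMin A := by
      rw [← Finset.mul_sum, Finset.sum_comm]
      have : ∑ i, ∑ c, (y i * v i c)^2 = ∑ i, y i ^ 2 := by
        apply Finset.sum_congr rfl; intro i _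
        have : ∑ c, (y i * v i c)^2 = y i ^ 2 * ∑ c, (v i c)^2 := by
          rw [Finset.mul_sum]
          apply Finset.sum_congr rfl; intro c _; ring
        rw [this, hvsum i, mul_one]
      rw [this, hysq, mul_one]
    have hR : ∑ c, ∑ i, ∑ j, A i j * (y i * v i c) * (y j * v j c)
        = ∑ i, ∑ j, A i j * y i * y j * (inner ℝ (v i) (v j) : ℝ) := by
      rw [Finset.sum_comm]
      apply Finset.sum_congr rfl; intro i _
      rw [Finset.sum_comm]
      apply Finset.sum_congr rfl; intro j _
      rw [inner_eq_sum, Finset.mul_sum]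
      apply Finset.sum_congr rfl; intro c _
      ring
    rw [hL, hR] at hsum
    exact hsum
  have hQ3 : ∑ i, ∑ j, A i j * y i * y j * (inner ℝ (v i) (v j) : ℝ)
      ≤ -t * (∑ i, ∑ j, A i j * y i * y j) := by
    rw [Finset.mul_sum]
    apply Finset.sum_le_sum; intro i _
    rw [Finset.mul_sum]
    apply Finset.sum_le_sum; intro j _
    by_cases hij : G.Adj i j
    · have hA1 : A i j = 1 := by simp [hAdef, hij]
      have hin := hvin i j hij
      have hyy : 0 ≤ y i * y j := mul_nonneg (hynn i) (hynn j)
      calc A i j * y i * y j * (inner ℝ (v i) (v j) : ℝ)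
          = (y i * y j) * (inner ℝ (v i) (v j) : ℝ) := by rw [hA1]; ring
        _ ≤ (y i * y j) * (-(1/(k-1))) := mul_le_mul_of_nonneg_left hin hyy
        _ = -t * (A i j * y i * y j) := by rw [hA1, ht]; ring
    · have hA0 : A i j = 0 := by simp [hAdef, hij]
      rw [hA0]; ring_nf
      simp
  have hchain : lamMin A ≤ -t * lamMax A := by
    have h1 : -t * (∑ i, ∑ j, A i j * y i * y j) ≤ -t * lamMax A := by
      apply mul_le_mul_of_nonpos_left hQ1
      linarith
    linarith
  have habs : |lamMin A| = -lamMin A := abs_of_neg hneg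
  have habs0 : 0 < |lamMin A| := abs_pos.mpr (ne_of_lt hneg)
  have hfinal : lamMax A ≤ (k-1) * |lamMin A| := by
    have h6 : t * lamMax A ≤ |lamMin A| := by rw [habs]; linarith
    have h7 : lamMax A = (k-1) * (t * lamMax A) := by
      rw [ht]; field_simp
    calc lamMax A = (k-1) * (t * lamMax A) := h7
      _ ≤ (k-1) * |lamMin A| := mul_le_mul_of_nonneg_left h6 (by linarith)
  have hdiv : lamMax A / |lamMin A| ≤ k - 1 := (div_le_iff₀ habs0).mpr (by linarith [hfinal])
  linarith
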